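/- Let X, Y be bounded operators on a Banach space. If e^{α(X+Y)} = e^{αX} e^{αY} for all α > 0, then X and Y commute. -/

import Mathlib

open NormedSpace

lemma analyticOnNhd_exp_smul {E : Type*} [NormedAddCommGroup E]
    [NormedSpace ℝ E] [CompleteSpace E] (A : E →L[ℝ] E) :
    AnalyticOnNhd ℝ (fun t : ℝ => exp (t • A)) Set.univ := by
  intro t _
  have h1 : AnalyticAt ℝ (exp : (E →L[ℝ] E) → (E →L[ℝ] E)) (t • A) :=
    analyticAt_exp_of_mem_ball (𝕂 := ℝ) (t • A) <| by
      rw [expSeries_radius_eq_top]; exact edist_lt_top _ _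
  have h2 : AnalyticAt ℝ (fun s : ℝ => s • A) t :=
    ((ContinuousLinearMap.id ℝ ℝ).smulRight A).analyticAt t
  show AnalyticAt ℝ (exp ∘ fun s : ℝ => s • A) t
  exact AnalyticAt.comp_of_eq h1 h2 rfl

/-- If `e^{α(X+Y)} = e^{αX} e^{αY}` for all `α > 0`, then the bounded operators `X` and `Y`
on a Banach space commute. -/
theorem exp_add_eq_exp_mul_exp_imp_commute {E : Type*} [NormedAddCommGroup E]
    [NormedSpace ℝ E] [CompleteSpace E] (X Y : E →L[ℝ] E)
    (h : ∀ α : ℝ, 0 < α →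
      exp (α • (X + Y)) = exp (α • X) * exp (α • Y)) :
    X * Y = Y * X := by
  -- Step 1: the identity holds for all real t by analytic continuation.
  have heq : ∀ t : ℝ, exp (t • (X + Y)) = exp (t • X) * exp (t • Y) := by
    have hf : AnalyticOnNhd ℝ (fun t : ℝ => exp (t • (X + Y))) Set.univ :=
      analyticOnNhd_exp_smul (X + Y)
    have hg : AnalyticOnNhd ℝ (fun t : ℝ => exp (t • X) * exp (t • Y)) Set.univ :=
      (analyticOnNhd_exp_smul X).mul (analyticOnNhd_exp_smul Y)
    have hev : (fun t : ℝ => exp (t • (X + Y)))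
        =ᶠ[nhds (1 : ℝ)] fun t : ℝ => exp (t • X) * exp (t • Y) := by
      filter_upwards [eventually_gt_nhds (by norm_num : (0:ℝ) < 1)] with t ht
      exact h t ht
    have := hf.eq_of_eventuallyEq hg hev
    exact fun t => congrFun this t
  -- Step 2: first derivatives agree as functions of t.
  have hd : ∀ t : ℝ, exp (t • (X + Y)) * (X + Y)
      = exp (t • X) * X * exp (t • Y) + exp (t • X) * (exp (t • Y) * Y) := by
    intro t
    have h1 : HasDerivAt (fun u : ℝ => exp (u • (X + Y)))
        (exp (t • (X + Y)) * (X + Y)) t := hasDerivAt_exp_smul_const (X + Y) t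
    have h2 : HasDerivAt (fun u : ℝ => exp (u • X) * exp (u • Y))
        (exp (t • X) * X * exp (t • Y) + exp (t • X) * (exp (t • Y) * Y)) t :=
      (hasDerivAt_exp_smul_const X t).mul (hasDerivAt_exp_smul_const Y t)
    have h1' : HasDerivAt (fun u : ℝ => exp (u • X) * exp (u • Y))
        (exp (t • (X + Y)) * (X + Y)) t := by
      refine h1.congr_of_eventuallyEq ?_
      filter_upwards with u; exact (heq u).symm
    exact h1'.unique h2
  -- Step 3: differentiate the identity from step 2 at t = 0.
  have e0X : exp ((0:ℝ) • X) = 1 := by rw [zero_smul, exp_zero]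
  have e0Y : exp ((0:ℝ) • Y) = 1 := by rw [zero_smul, exp_zero]
  have e0XY : exp ((0:ℝ) • (X + Y)) = 1 := by rw [zero_smul, exp_zero]
  have hL : HasDerivAt (fun t : ℝ => exp (t • (X + Y)) * (X + Y))
      ((X + Y) * (X + Y)) 0 := by
    have := (hasDerivAt_exp_smul_const (X + Y) (0:ℝ)).mul_const (X + Y)
    rwa [e0XY, one_mul] at this
  have hR : HasDerivAt (fun t : ℝ =>
      exp (t • X) * X * exp (t • Y) + exp (t • X) * (exp (t • Y) * Y))
      (X * X + X * Y + (X * Y + Y * Y)) 0 := by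
    have hXx : HasDerivAt (fun t : ℝ => exp (t • X) * X) (X * X) (0:ℝ) := by
      have := (hasDerivAt_exp_smul_const X (0:ℝ)).mul_const X
      rwa [e0X, one_mul] at this
    have hYy : HasDerivAt (fun t : ℝ => exp (t • Y) * Y) (Y * Y) (0:ℝ) := by
      have := (hasDerivAt_exp_smul_const Y (0:ℝ)).mul_const Y
      rwa [e0Y, one_mul] at this
    have hX' : HasDerivAt (fun t : ℝ => exp (t • X)) X (0:ℝ) := by
      have := hasDerivAt_exp_smul_const X (0:ℝ)
      rwa [e0X, one_mul] at this
    have hY' : HasDerivAt (fun t : ℝ => exp (t • Y)) Y (0:ℝ) := by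
      have := hasDerivAt_exp_smul_const Y (0:ℝ)
      rwa [e0Y, one_mul] at this
    have t1 : HasDerivAt (fun t : ℝ => exp (t • X) * X * exp (t • Y))
        (X * X + X * Y) (0:ℝ) := by
      have := hXx.mul hY'
      simpa [e0X, e0Y, Pi.mul_def] using this
    have t2 : HasDerivAt (fun t : ℝ => exp (t • X) * (exp (t • Y) * Y))
        (X * Y + Y * Y) (0:ℝ) := by
      have := hX'.mul hYy
      simpa [e0X, e0Y, Pi.mul_def] using this
    exact t1.add t2
  have hL' : HasDerivAt (fun t : ℝ =>
      exp (t • X) * X * exp (t • Y) + exp (t • X) * (exp (t • Y) * Y))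
      ((X + Y) * (X + Y)) 0 := by
    refine hL.congr_of_eventuallyEq ?_
    filter_upwards with u; exact (hd u).symm
  have key : (X + Y) * (X + Y) = X * X + X * Y + (X * Y + Y * Y) := hL'.unique hR
  rw [add_mul, mul_add, mul_add, add_assoc, add_assoc] at key
  exact (add_right_cancel (add_left_cancel (add_left_cancel key))).symm
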